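/- Let (Ω, F, μ) be a measure space, T > 0, r ∈ [1,∞), q ∈ (1,∞), and let X : Ω × (0,T) → ℝ be jointly measurable with ‖ω ↦ ‖X(ω,·)‖_{L^∞(0,T)}‖_{L^r(Ω,μ)} < ∞. Then for every ε > 0 and every t ∈ [0,T], ‖ω ↦ ‖X(ω,·)‖_{L^q(0,t)}‖_{L^r(Ω,μ)} ≤ ε ‖ω ↦ ‖X(ω,·)‖_{L^∞(0,t)}‖_{L^r(Ω,μ)} + ε^{1−q} (1/q) (1 − 1/q)^{q−1} ∫₀^t ‖ω ↦ ‖X(ω,·)‖_{L^∞(0,s)}‖_{L^r(Ω,μ)} ds. -/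

import Mathlib

open MeasureTheory
open scoped ENNReal NNReal

namespace Stmt5Aux

open Set Function
open scoped Classical

variable {Ω α : Type*} [MeasurableSpace Ω] [MeasurableSpace α]

lemma young_aux {q ε : ℝ} (hq : 1 < q) (hε : 0 < ε) (a b : ℝ≥0∞) :
    a ^ (1 - 1/q) * b ^ (1/q) ≤ ENNReal.ofReal ε * a +
      ENNReal.ofReal (ε ^ (1 - q) * (1 / q) * (1 - 1 / q) ^ (q - 1)) * b := by
  have hq0 : (0:ℝ) < q := lt_trans one_pos hq
  set P := Real.conjExponent q with hPdef
  have hpq : P.HolderConjugate q := (Real.HolderConjugate.conjExponent hq).symm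
  have hPpos : 0 < P := hpq.pos
  have hPe : 0 < P * ε := mul_pos hPpos hε
  have h1P : 1 - 1/q = 1/P := by
    have := hpq.symm.one_sub_inv
    rw [one_div, one_div, this]
  set c := ENNReal.ofReal (P * ε) with hc
  set d := ENNReal.ofReal ((P * ε) ^ (1 - q)) with hd
  have key := ENNReal.young_inequality ((c*a) ^ (1/P)) ((d*b) ^ (1/q)) hpq
  have hL : ((c*a) ^ (1/P)) * ((d*b) ^ (1/q)) = a ^ (1/P) * b ^ (1/q) := by
    rw [ENNReal.mul_rpow_of_nonneg _ _ (by positivity : (0:ℝ) ≤ 1/P),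
        ENNReal.mul_rpow_of_nonneg _ _ (by positivity : (0:ℝ) ≤ 1/q),
        mul_mul_mul_comm]
    have h1 : c ^ (1/P) = ENNReal.ofReal ((P*ε) ^ (1/P)) := ENNReal.ofReal_rpow_of_pos hPe
    have h2 : d ^ (1/q) = ENNReal.ofReal (((P*ε) ^ (1-q)) ^ (1/q)) :=
      ENNReal.ofReal_rpow_of_pos (Real.rpow_pos_of_pos hPe _)
    rw [h1, h2, ← Real.rpow_mul hPe.le, ← ENNReal.ofReal_mul (Real.rpow_nonneg hPe.le _),
        ← Real.rpow_add hPe]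
    have hexp : 1/P + (1-q) * (1/q) = 0 := by
      rw [← h1P]; field_simp; ring
    rw [hexp, Real.rpow_zero, ENNReal.ofReal_one, one_mul]
  have hT1 : ((c*a) ^ (1/P)) ^ P / ENNReal.ofReal P = ENNReal.ofReal ε * a := by
    rw [← ENNReal.rpow_mul, one_div, inv_mul_cancel₀ hPpos.ne', ENNReal.rpow_one,
        hc, ENNReal.ofReal_mul hPpos.le, mul_assoc, mul_comm (ENNReal.ofReal P) _,
        mul_div_assoc, ENNReal.div_self (by simpa using hPpos) ENNReal.ofReal_ne_top, mul_one]
  have hT2 : ((d*b) ^ (1/q)) ^ q / ENNReal.ofReal q =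
      ENNReal.ofReal (ε ^ (1 - q) * (1 / q) * (1 - 1 / q) ^ (q - 1)) * b := by
    rw [← ENNReal.rpow_mul, one_div, inv_mul_cancel₀ hq0.ne', ENNReal.rpow_one]
    rw [div_eq_mul_inv, mul_right_comm, ← div_eq_mul_inv]
    congr 1
    rw [hd, ← ENNReal.ofReal_div_of_pos hq0]
    congr 1
    have h1q : (0:ℝ) < 1 - 1/q := by rw [h1P]; positivity
    have hP1q : P ^ (1-q) = (1 - 1/q) ^ (q-1) := by
      have hPinv : P = (1 - 1/q)⁻¹ := by rw [h1P, one_div, inv_inv]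
      rw [hPinv, Real.inv_rpow h1q.le, ← Real.rpow_neg h1q.le, neg_sub]
    rw [Real.mul_rpow hPpos.le hε.le, hP1q]; ring
  calc a ^ (1 - 1/q) * b ^ (1/q) = ((c*a) ^ (1/P)) * ((d*b) ^ (1/q)) := by rw [hL, h1P]
    _ ≤ _ := key
    _ = _ := by rw [hT1, hT2]

lemma measurable_essSup_aux {f : Ω × α → ℝ≥0∞} (hf : Measurable f) (ν : Measure α) [SFinite ν] :
    Measurable fun ω => essSup (fun σ => f (ω, σ)) ν := by
  have hrepr : (fun ω => essSup (fun σ => f (ω, σ)) ν) = fun ω =>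
      ⨅ cq : ℚ, if ν (Prod.mk ω ⁻¹' {p | (Real.toNNReal cq : ℝ≥0∞) < f p}) = 0
        then (Real.toNNReal cq : ℝ≥0∞) else ⊤ := by
    funext ω
    apply le_antisymm
    · refine le_iInf fun cq => ?_
      split_ifs with h
      · refine essSup_le_of_ae_le _ (ae_iff.mpr ?_)
        simpa [not_le] using h
      · exact le_top
    · rcases eq_or_ne (essSup (fun σ => f (ω, σ)) ν) ⊤ with h | h
      · rw [h]; exact le_top
      · refine ENNReal.le_of_forall_pos_le_add fun δ hδ _ => ?_
        have hlt : essSup (fun σ => f (ω, σ)) ν < essSup (fun σ => f (ω, σ)) ν + δ :=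
          ENNReal.lt_add_right h (by exact_mod_cast hδ.ne')
        obtain ⟨cq, _, hlt1, hlt2⟩ := ENNReal.lt_iff_exists_rat_btwn.mp hlt
        have hcond : ν (Prod.mk ω ⁻¹' {p | (Real.toNNReal cq : ℝ≥0∞) < f p}) = 0 := by
          refine measure_mono_null ?_ (ae_iff.mp (ENNReal.ae_le_essSup (fun σ => f (ω, σ))))
          intro σ hσ
          simp only [mem_setOf_eq, mem_preimage] at hσ ⊢
          exact not_le.mpr (lt_of_le_of_lt hlt1.le hσ)
        calc (⨅ cq : ℚ, if ν (Prod.mk ω ⁻¹' {p | (Real.toNNReal cq : ℝ≥0∞) < f p}) = 0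
                then (Real.toNNReal cq : ℝ≥0∞) else ⊤) ≤ _ := iInf_le _ cq
          _ = (Real.toNNReal cq : ℝ≥0∞) := if_pos hcond
          _ ≤ _ := hlt2.le
  rw [hrepr]
  refine Measurable.iInf fun cq => ?_
  refine Measurable.ite ?_ measurable_const measurable_const
  exact (measurable_measure_prodMk_left (measurableSet_lt measurable_const hf))
    (measurableSet_singleton 0)

lemma sigmaFinite_restrict_pos_aux {μ : Measure Ω} {f : Ω → ℝ≥0∞} (hf : Measurable f)
    (h : ∫⁻ ω, f ω ∂μ ≠ ∞) : SigmaFinite (μ.restrict {ω | 0 < f ω}) := by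
  set A : ℕ → Set Ω := fun n => {ω | ((n : ℝ≥0∞) + 1)⁻¹ ≤ f ω} with hA
  refine MeasureTheory.Measure.sigmaFinite_of_countable (S := insert {ω | ¬ 0 < f ω} (Set.range A))
    ((Set.countable_range A).insert _) ?_ ?_
  · rintro s (rfl | ⟨n, rfl⟩)
    · have hcompl : {ω | ¬0 < f ω} = {ω | 0 < f ω}ᶜ := rfl
      rw [hcompl, Measure.restrict_apply (measurableSet_lt measurable_const hf).compl,
        Set.compl_inter_self]
      simp
    · refine lt_of_le_of_lt (Measure.restrict_apply_le _ _) (lt_top_iff_ne_top.mpr ?_)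
      have hne : ((n : ℝ≥0∞) + 1)⁻¹ ≠ 0 := by
          simp
      have hnetop : ((n : ℝ≥0∞) + 1)⁻¹ ≠ ∞ := by
          simp
      have := meas_ge_le_lintegral_div (μ := μ) hf.aemeasurable hne hnetop
      refine ne_top_of_le_ne_top ?_ this
      exact (ENNReal.div_lt_top h hne).ne
  · apply Set.eq_univ_of_forall
    intro ω
    rcases eq_or_ne (f ω) 0 with h0 | h0
    · exact Set.mem_sUnion.mpr ⟨_, Set.mem_insert _ _, by simp [h0]⟩
    · obtain ⟨n, hn⟩ := ENNReal.exists_inv_nat_lt h0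
      refine Set.mem_sUnion.mpr ⟨A n, Set.mem_insert_of_mem _ ⟨n, rfl⟩, ?_⟩
      have : ((n : ℝ≥0∞) + 1)⁻¹ ≤ ((n : ℝ≥0∞))⁻¹ :=
        ENNReal.inv_le_inv.mpr (le_add_of_nonneg_right zero_le)
      exact le_trans this hn.le

lemma minkowski_aux (μ : Measure Ω) [SigmaFinite μ] (ν : Measure α) [SFinite ν]
    {r : ℝ} (hr : 1 ≤ r) {f : Ω → α → ℝ≥0∞} (hf : Measurable (uncurry f))
    (hfin : ∫⁻ ω, (∫⁻ σ, f ω σ ∂ν) ^ r ∂μ ≠ ∞) :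
    (∫⁻ ω, (∫⁻ σ, f ω σ ∂ν) ^ r ∂μ) ^ (1/r) ≤
      ∫⁻ σ, (∫⁻ ω, f ω σ ^ r ∂μ) ^ (1/r) ∂ν := by
  have hr0 : (0:ℝ) < r := lt_of_lt_of_le one_pos hr
  have hK : Measurable fun ω => ∫⁻ σ, f ω σ ∂ν := hf.lintegral_prod_right'
  rcases eq_or_lt_of_le hr with h1 | h1
  · rw [← h1]
    simp only [ENNReal.rpow_one, ne_eq, one_div_one]
    rw [← h1] at hfin
    simp only [ENNReal.rpow_one] at hfin ⊢
    exact le_of_eq (lintegral_lintegral_swap hf.aemeasurable)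
  · set r' := Real.conjExponent r with hr'def
    have hconj : r'.HolderConjugate r := (Real.HolderConjugate.conjExponent h1).symm
    set K := fun ω => ∫⁻ σ, f ω σ ∂ν with hKdef
    set A := ∫⁻ ω, K ω ^ r ∂μ with hAdef
    set B := ∫⁻ σ, (∫⁻ ω, f ω σ ^ r ∂μ) ^ (1/r) ∂ν with hBdef
    rcases eq_or_ne A 0 with hA0 | hA0
    · rw [hA0, ENNReal.zero_rpow_of_pos (by positivity)]
      exact zero_le
    have hr'pos : 0 < 1/r' := hconj.one_div_pos
    have hAt' : A ^ (1/r') ≠ ⊤ := ENNReal.rpow_ne_top_of_nonneg hr'pos.le hfin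
    have hAx : A ^ (1/r') ≠ 0 := by
      intro h
      rcases ENNReal.rpow_eq_zero_iff.mp h with ⟨h', _⟩ | ⟨_, h'⟩
      · exact hA0 h'
      · exact absurd h' (not_lt.mpr hr'pos.le)
    have hsec : ∀ σ, Measurable fun ω => f ω σ := fun σ => hf.of_uncurry_right
    have hsecl : ∀ ω, Measurable (f ω) := fun ω => hf.of_uncurry_left
    have key : A ≤ A ^ (1/r') * B := by
      calc A = ∫⁻ ω, K ω ^ (r-1) * K ω ∂μ := by
              apply lintegral_congr; intro ω
              conv_lhs => rw [show r = (r-1)+1 by ring]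
              rw [ENNReal.rpow_add_of_nonneg _ _ (by linarith) zero_le_one, ENNReal.rpow_one]
        _ = ∫⁻ ω, ∫⁻ σ, K ω ^ (r-1) * f ω σ ∂ν ∂μ := by
              apply lintegral_congr; intro ω
              rw [lintegral_const_mul _ (hsecl ω)]
        _ = ∫⁻ σ, ∫⁻ ω, K ω ^ (r-1) * f ω σ ∂μ ∂ν := by
              refine lintegral_lintegral_swap ?_
              exact (((hK.comp measurable_fst).pow measurable_const).mul hf).aemeasurable
        _ ≤ ∫⁻ σ, (∫⁻ ω, (K ω ^ (r-1)) ^ r' ∂μ) ^ (1/r') * (∫⁻ ω, f ω σ ^ r ∂μ) ^ (1/r) ∂ν := by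
              refine lintegral_mono fun σ => ?_
              exact ENNReal.lintegral_mul_le_Lp_mul_Lq μ hconj
                ((hK.pow measurable_const).aemeasurable) ((hsec σ).aemeasurable)
        _ = A ^ (1/r') * B := by
              have hpow : ∀ ω, (K ω ^ (r-1)) ^ r' = K ω ^ r := by
                intro ω; rw [← ENNReal.rpow_mul, hconj.symm.sub_one_mul_conj]
              simp_rw [hpow]
              exact lintegral_const_mul' _ _ hAt'
    have hAA : A = A ^ (1/r') * A ^ (1/r) := by
      rw [← ENNReal.rpow_add _ _ hA0 hfin]
      have : 1/r' + 1/r = 1 := by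
        rw [one_div, one_div]; exact hconj.inv_add_inv_eq_one
      rw [this, ENNReal.rpow_one]
    exact (ENNReal.mul_le_mul_iff_right hAx hAt').mp (hAA.symm.trans_le key)

lemma lp_const_mul_aux (μ : Measure Ω) {r : ℝ} (hr0 : 0 < r) (c : ℝ≥0∞) (hc : c ≠ ⊤)
    {h : Ω → ℝ≥0∞} :
    (∫⁻ ω, (c * h ω) ^ r ∂μ) ^ (1/r) = c * (∫⁻ ω, h ω ^ r ∂μ) ^ (1/r) := by
  simp_rw [ENNReal.mul_rpow_of_nonneg _ _ hr0.le]
  rw [lintegral_const_mul' _ _ (ENNReal.rpow_ne_top_of_nonneg hr0.le hc),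
      ENNReal.mul_rpow_of_nonneg _ _ (by positivity : (0:ℝ) ≤ 1/r), ← ENNReal.rpow_mul,
      mul_one_div_cancel hr0.ne', ENNReal.rpow_one]

theorem main_aux (μ : Measure Ω) {T ε t r q : ℝ} (hr : 1 ≤ r) (hq : 1 < q)
    (hε : 0 < ε) (ht0 : 0 ≤ t) (htT : t ≤ T)
    (X : Ω → ℝ → ℝ) (hX : Measurable (Function.uncurry X))
    (hfin : (∫⁻ ω, (eLpNorm (X ω) ∞ (volume.restrict (Set.Ioo 0 T))) ^ r ∂μ) ^ (1/r) < ∞) :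
    (∫⁻ ω, (eLpNorm (X ω) (ENNReal.ofReal q) (volume.restrict (Set.Ioo 0 t))) ^ r ∂μ) ^ (1/r) ≤
      ENNReal.ofReal ε *
          (∫⁻ ω, (eLpNorm (X ω) ∞ (volume.restrict (Set.Ioo 0 t))) ^ r ∂μ) ^ (1/r) +
        ENNReal.ofReal (ε ^ (1 - q) * (1 / q) * (1 - 1 / q) ^ (q - 1)) *
          ∫⁻ s in Set.Ioo (0:ℝ) t,
            (∫⁻ ω, (eLpNorm (X ω) ∞ (volume.restrict (Set.Ioo 0 s))) ^ r ∂μ) ^ (1/r) := by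
  have hr0 : (0:ℝ) < r := lt_of_lt_of_le one_pos hr
  have hq0 : (0:ℝ) < q := lt_trans one_pos hq
  set N : Ω → ℝ → ℝ≥0∞ := fun ω s => eLpNorm (X ω) ∞ (volume.restrict (Set.Ioo 0 s)) with hN
  set Cc : ℝ≥0∞ := ENNReal.ofReal (ε ^ (1 - q) * (1 / q) * (1 - 1 / q) ^ (q - 1)) with hCc
  -- basic facts about N
  have hXsec : ∀ ω, Measurable (X ω) := fun ω => hX.of_uncurry_left
  have hNmono : ∀ ω, Monotone (N ω) := by
    intro ω s₁ s₂ h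
    exact eLpNorm_mono_measure _ (Measure.restrict_mono (Ioo_subset_Ioo le_rfl h) le_rfl)
  have hNmeas : ∀ s : ℝ, Measurable fun ω => N ω s := by
    intro s
    have h := measurable_essSup_aux hX.nnnorm.coe_nnreal_ennreal (volume.restrict (Set.Ioo 0 s))
    have heq : (fun ω => N ω s) =
        (fun ω => essSup (fun σ => ((‖Function.uncurry X (ω, σ)‖₊ : ℝ≥0) : ℝ≥0∞))
          (volume.restrict (Set.Ioo 0 s))) := by
      funext ω
      rw [hN]
      simp only
      rw [eLpNorm_exponent_top]
      rfl
    rw [heq]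
    exact h
  have hae_bound : ∀ ω, ∀ᵐ σ ∂(volume : Measure ℝ), ∀ p : ℚ,
      σ ∈ Set.Ioo (0:ℝ) (p:ℝ) → ((‖X ω σ‖₊ : ℝ≥0) : ℝ≥0∞) ≤ N ω (p:ℝ) := by
    intro ω
    rw [ae_all_iff]
    intro p
    refine (ae_restrict_iff' measurableSet_Ioo).mp ?_
    filter_upwards [ae_le_eLpNormEssSup (f := X ω)
      (μ := volume.restrict (Set.Ioo (0:ℝ) (p:ℝ)))] with σ h
    have : N ω (p:ℝ) = eLpNormEssSup (X ω) (volume.restrict (Set.Ioo (0:ℝ) (p:ℝ))) :=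
      eLpNorm_exponent_top
    rw [this]
    exact h
  have hNleft : ∀ ω s, N ω s = ⨆ p : ℚ, if (p:ℝ) < s then N ω (p:ℝ) else 0 := by
    intro ω s
    apply le_antisymm
    · have h1 : N ω s = eLpNormEssSup (X ω) (volume.restrict (Set.Ioo 0 s)) :=
        eLpNorm_exponent_top
      rw [h1]
      refine essSup_le_of_ae_le _ ?_
      filter_upwards [ae_restrict_of_ae (hae_bound ω),
        ae_restrict_mem (measurableSet_Ioo (a := (0:ℝ)) (b := s))] with σ h2 h3
      obtain ⟨p, hp1, hp2⟩ := exists_rat_btwn h3.2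
      calc ((‖X ω σ‖₊ : ℝ≥0) : ℝ≥0∞) ≤ N ω (p:ℝ) := h2 p ⟨h3.1, hp1⟩
        _ ≤ ⨆ p : ℚ, if (p:ℝ) < s then N ω (p:ℝ) else 0 := by
            refine le_trans (le_of_eq ?_) (le_iSup _ p)
            rw [if_pos hp2]
    · refine iSup_le fun p => ?_
      split_ifs with h
      · exact hNmono ω h.le
      · exact zero_le
  have hNjoint : Measurable fun z : Ω × ℝ => N z.1 z.2 := by
    have heq : (fun z : Ω × ℝ => N z.1 z.2) =
        fun z => ⨆ p : ℚ, if (p:ℝ) < z.2 then N z.1 (p:ℝ) else 0 := by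
      funext z; exact hNleft z.1 z.2
    rw [heq]
    refine Measurable.iSup fun p => ?_
    exact Measurable.ite (measurable_snd measurableSet_Ioi)
      ((hNmeas (p:ℝ)).comp measurable_fst) measurable_const
  -- a.e. pointwise bound `‖X ω σ‖ ≤ N ω σ`
  have haeFN : ∀ ω, ∀ᵐ σ ∂(volume.restrict (Set.Ioo (0:ℝ) t)),
      ((‖X ω σ‖₊ : ℝ≥0) : ℝ≥0∞) ≤ N ω σ := by
    intro ω
    set g : ℝ → ℝ≥0∞ := fun σ => ⨅ (p : ℚ) (_ : σ < (p:ℝ)), N ω (p:ℝ) with hg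
    set D : Set ℝ := {σ | N ω σ < g σ} with hD
    have hgN : ∀ σ₁ σ₂ : ℝ, σ₁ < σ₂ → g σ₁ ≤ N ω σ₂ := by
      intro σ₁ σ₂ h
      obtain ⟨p, hp1, hp2⟩ := exists_rat_btwn h
      exact le_trans (iInf₂_le p hp1) (hNmono ω hp2.le)
    have hDc : D.Countable := by
      have hsub : D ⊆ ⋃ c : ℚ, {σ | N ω σ < ((Real.toNNReal c : ℝ≥0) : ℝ≥0∞) ∧
          ((Real.toNNReal c : ℝ≥0) : ℝ≥0∞) < g σ} := by
        intro σ hσ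
        obtain ⟨c, _, h1', h2'⟩ := ENNReal.lt_iff_exists_rat_btwn.mp hσ
        exact Set.mem_iUnion.mpr ⟨c, h1', h2'⟩
      refine Set.Countable.mono hsub (Set.countable_iUnion fun c => Set.Subsingleton.countable ?_)
      intro σ₁ hσ₁ σ₂ hσ₂
      by_contra hne
      rcases lt_or_gt_of_ne hne with hlt | hlt
      · exact absurd (lt_of_le_of_lt (le_trans hσ₁.2.le (hgN _ _ hlt)) hσ₂.1) (lt_irrefl _)
      · exact absurd (lt_of_le_of_lt (le_trans hσ₂.2.le (hgN _ _ hlt)) hσ₁.1) (lt_irrefl _)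
    have hD0 : (volume : Measure ℝ) D = 0 := hDc.measure_zero _
    have hDae : ∀ᵐ σ ∂(volume : Measure ℝ), σ ∉ D := measure_eq_zero_iff_ae_notMem.mp hD0
    filter_upwards [ae_restrict_of_ae (hae_bound ω), ae_restrict_of_ae hDae,
      ae_restrict_mem (measurableSet_Ioo (a := (0:ℝ)) (b := t))] with σ h1 h2 h3
    have hFg : ((‖X ω σ‖₊ : ℝ≥0) : ℝ≥0∞) ≤ g σ :=
      le_iInf fun p => le_iInf fun hp => h1 p ⟨h3.1, hp⟩
    exact le_trans hFg (not_lt.mp h2)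
  have haeFNt : ∀ ω, ∀ᵐ σ ∂(volume.restrict (Set.Ioo (0:ℝ) t)),
      ((‖X ω σ‖₊ : ℝ≥0) : ℝ≥0∞) ≤ N ω t := by
    intro ω
    filter_upwards [ae_le_eLpNormEssSup (f := X ω)
      (μ := volume.restrict (Set.Ioo (0:ℝ) t))] with σ h
    have : N ω t = eLpNormEssSup (X ω) (volume.restrict (Set.Ioo (0:ℝ) t)) :=
      eLpNorm_exponent_top
    rw [this]
    exact h
  -- pointwise (in ω) interpolation bound
  have hpoint : ∀ ω, eLpNorm (X ω) (ENNReal.ofReal q) (volume.restrict (Set.Ioo 0 t)) ≤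
      ENNReal.ofReal ε * N ω t + Cc * ∫⁻ σ, N ω σ ∂(volume.restrict (Set.Ioo (0:ℝ) t)) := by
    intro ω
    have hq'ne0 : (ENNReal.ofReal q) ≠ 0 := by
      simp only [ne_eq, ENNReal.ofReal_eq_zero, not_le]
      linarith
    rw [eLpNorm_eq_lintegral_rpow_enorm_toReal hq'ne0 ENNReal.ofReal_ne_top,
      ENNReal.toReal_ofReal hq0.le]
    have hNσmeas : Measurable fun σ => N ω σ := Monotone.measurable (hNmono ω)
    calc (∫⁻ σ, ((‖X ω σ‖₊ : ℝ≥0) : ℝ≥0∞) ^ q ∂(volume.restrict (Set.Ioo (0:ℝ) t))) ^ (1/q)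
        ≤ ((N ω t) ^ (q-1) * ∫⁻ σ, N ω σ ∂(volume.restrict (Set.Ioo (0:ℝ) t))) ^ (1/q) := by
          refine ENNReal.rpow_le_rpow ?_ (by positivity)
          refine le_trans (lintegral_mono_ae ?_) (le_of_eq (lintegral_const_mul _ hNσmeas))
          filter_upwards [haeFN ω, haeFNt ω] with σ h1 h2
          calc ((‖X ω σ‖₊ : ℝ≥0) : ℝ≥0∞) ^ q
              = ((‖X ω σ‖₊ : ℝ≥0) : ℝ≥0∞) ^ (q-1) * ((‖X ω σ‖₊ : ℝ≥0) : ℝ≥0∞) := by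
                conv_lhs => rw [show q = (q-1)+1 by ring]
                rw [ENNReal.rpow_add_of_nonneg _ _ (by linarith) zero_le_one, ENNReal.rpow_one]
            _ ≤ (N ω t) ^ (q-1) * N ω σ :=
                mul_le_mul' (ENNReal.rpow_le_rpow h2 (by linarith)) h1
      _ = (N ω t) ^ (1 - 1/q) *
            (∫⁻ σ, N ω σ ∂(volume.restrict (Set.Ioo (0:ℝ) t))) ^ (1/q) := by
          rw [ENNReal.mul_rpow_of_nonneg _ _ (by positivity : (0:ℝ) ≤ 1/q),
            ← ENNReal.rpow_mul, show (q-1) * (1/q) = 1 - 1/q by field_simp]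
      _ ≤ _ := young_aux hq hε _ _
  -- reduction to a σ-finite part
  set S : Set Ω := {ω | 0 < N ω T ^ r} with hS
  have hSmeas : MeasurableSet S := measurableSet_lt measurable_const ((hNmeas T).pow measurable_const)
  have hfin' : ∫⁻ ω, N ω T ^ r ∂μ ≠ ⊤ :=
    ((ENNReal.rpow_lt_top_iff_of_pos (by positivity : (0:ℝ) < 1/r)).mp hfin).ne
  haveI hSF : SigmaFinite (μ.restrict S) :=
    sigmaFinite_restrict_pos_aux ((hNmeas T).pow measurable_const) hfin'
  have hNz : ∀ ω, ω ∉ S → N ω T = 0 := by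
    intro ω hω
    have h0 : N ω T ^ r = 0 := by
      by_contra h
      exact hω (pos_iff_ne_zero.mpr h)
    rcases ENNReal.rpow_eq_zero_iff.mp h0 with ⟨h', _⟩ | ⟨_, h'⟩
    · exact h'
    · exact absurd h' (not_lt.mpr hr0.le)
  have hzeroq : ∀ ω, ω ∉ S →
      eLpNorm (X ω) (ENNReal.ofReal q) (volume.restrict (Set.Ioo 0 t)) = 0 := by
    intro ω hω
    have hNt0 : N ω T = 0 := hNz ω hω
    have hXae : X ω =ᵐ[volume.restrict (Set.Ioo (0:ℝ) T)] 0 := by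
      refine eLpNormEssSup_eq_zero_iff.mp ?_
      rw [← eLpNorm_exponent_top]
      exact hNt0
    have hXae' : X ω =ᵐ[volume.restrict (Set.Ioo (0:ℝ) t)] 0 :=
      ae_restrict_of_ae_restrict_of_subset (Ioo_subset_Ioo le_rfl htT) hXae
    rw [eLpNorm_congr_ae hXae', eLpNorm_zero]
  have hLHSrestrict :
      ∫⁻ ω, (eLpNorm (X ω) (ENNReal.ofReal q) (volume.restrict (Set.Ioo 0 t))) ^ r ∂μ =
      ∫⁻ ω, (eLpNorm (X ω) (ENNReal.ofReal q) (volume.restrict (Set.Ioo 0 t))) ^ r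
        ∂(μ.restrict S) := by
    rw [← lintegral_add_compl
      (fun ω => (eLpNorm (X ω) (ENNReal.ofReal q) (volume.restrict (Set.Ioo 0 t))) ^ r) hSmeas]
    have hz : ∫⁻ ω in Sᶜ,
        (eLpNorm (X ω) (ENNReal.ofReal q) (volume.restrict (Set.Ioo 0 t))) ^ r ∂μ = 0 := by
      rw [setLIntegral_congr_fun hSmeas.compl
        ((fun ω hω => by
          rw [hzeroq ω hω, ENNReal.zero_rpow_of_pos hr0] : ∀ ω ∈ Sᶜ,
            (eLpNorm (X ω) (ENNReal.ofReal q) (volume.restrict (Set.Ioo 0 t))) ^ r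
              = (fun _ => (0:ℝ≥0∞)) ω)), lintegral_zero]
    rw [hz, add_zero]
  -- measurability of the inner integral
  have hJmeas : Measurable fun ω => ∫⁻ σ, N ω σ ∂(volume.restrict (Set.Ioo (0:ℝ) t)) :=
    Measurable.lintegral_prod_right' hNjoint
  -- finiteness for Minkowski
  have hJle : ∀ ω, ∫⁻ σ, N ω σ ∂(volume.restrict (Set.Ioo (0:ℝ) t)) ≤
      ENNReal.ofReal t * N ω T := by
    intro ω
    calc ∫⁻ σ, N ω σ ∂(volume.restrict (Set.Ioo (0:ℝ) t))
        ≤ ∫⁻ _, N ω T ∂(volume.restrict (Set.Ioo (0:ℝ) t)) := by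
          refine lintegral_mono_ae ?_
          filter_upwards [ae_restrict_mem (measurableSet_Ioo (a := (0:ℝ)) (b := t))] with σ hσ
          exact hNmono ω (le_trans hσ.2.le htT)
      _ = ENNReal.ofReal t * N ω T := by
          rw [lintegral_const, Measure.restrict_apply_univ, Real.volume_Ioo, sub_zero, mul_comm]
  have hfinJ : ∫⁻ ω, (∫⁻ σ, N ω σ ∂(volume.restrict (Set.Ioo (0:ℝ) t))) ^ r
      ∂(μ.restrict S) ≠ ⊤ := by
    have hb : ∫⁻ ω, (∫⁻ σ, N ω σ ∂(volume.restrict (Set.Ioo (0:ℝ) t))) ^ r ∂(μ.restrict S) ≤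
        (ENNReal.ofReal t) ^ r * ∫⁻ ω, (N ω T) ^ r ∂μ := by
      calc ∫⁻ ω, (∫⁻ σ, N ω σ ∂(volume.restrict (Set.Ioo (0:ℝ) t))) ^ r ∂(μ.restrict S)
        ≤ ∫⁻ ω, (ENNReal.ofReal t * N ω T) ^ r ∂(μ.restrict S) :=
          lintegral_mono fun ω => ENNReal.rpow_le_rpow (hJle ω) hr0.le
      _ = (ENNReal.ofReal t) ^ r * ∫⁻ ω, (N ω T) ^ r ∂(μ.restrict S) := by
          simp_rw [ENNReal.mul_rpow_of_nonneg _ _ hr0.le]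
          exact lintegral_const_mul' _ _
            (ENNReal.rpow_ne_top_of_nonneg hr0.le ENNReal.ofReal_ne_top)
      _ ≤ (ENNReal.ofReal t) ^ r * ∫⁻ ω, (N ω T) ^ r ∂μ := by
          exact mul_le_mul_right (lintegral_mono' Measure.restrict_le_self le_rfl) _
    exact ne_top_of_le_ne_top (ENNReal.mul_ne_top
      (ENNReal.rpow_ne_top_of_nonneg hr0.le ENNReal.ofReal_ne_top) hfin') hb
  -- main chain
  calc (∫⁻ ω, (eLpNorm (X ω) (ENNReal.ofReal q) (volume.restrict (Set.Ioo 0 t))) ^ r ∂μ) ^ (1/r)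
      = (∫⁻ ω, (eLpNorm (X ω) (ENNReal.ofReal q) (volume.restrict (Set.Ioo 0 t))) ^ r
          ∂(μ.restrict S)) ^ (1/r) := by rw [hLHSrestrict]
    _ ≤ (∫⁻ ω, (ENNReal.ofReal ε * N ω t +
          Cc * ∫⁻ σ, N ω σ ∂(volume.restrict (Set.Ioo (0:ℝ) t))) ^ r ∂(μ.restrict S)) ^ (1/r) := by
        refine ENNReal.rpow_le_rpow (lintegral_mono fun ω => ?_) (by positivity)
        exact ENNReal.rpow_le_rpow (hpoint ω) hr0.le
    _ ≤ (∫⁻ ω, (ENNReal.ofReal ε * N ω t) ^ r ∂(μ.restrict S)) ^ (1/r) +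
        (∫⁻ ω, (Cc * ∫⁻ σ, N ω σ ∂(volume.restrict (Set.Ioo (0:ℝ) t))) ^ r
          ∂(μ.restrict S)) ^ (1/r) :=
        ENNReal.lintegral_Lp_add_le (measurable_const.mul (hNmeas t)).aemeasurable
          (measurable_const.mul hJmeas).aemeasurable hr
    _ = ENNReal.ofReal ε * (∫⁻ ω, (N ω t) ^ r ∂(μ.restrict S)) ^ (1/r) +
        Cc * (∫⁻ ω, (∫⁻ σ, N ω σ ∂(volume.restrict (Set.Ioo (0:ℝ) t))) ^ r
          ∂(μ.restrict S)) ^ (1/r) := by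
        rw [lp_const_mul_aux _ hr0 _ ENNReal.ofReal_ne_top,
          lp_const_mul_aux _ hr0 _ ENNReal.ofReal_ne_top]
    _ ≤ ENNReal.ofReal ε * (∫⁻ ω, (N ω t) ^ r ∂μ) ^ (1/r) +
        Cc * ∫⁻ s in Set.Ioo (0:ℝ) t, (∫⁻ ω, (N ω s) ^ r ∂μ) ^ (1/r) := by
        refine add_le_add (mul_le_mul_right ?_ _) (mul_le_mul_right ?_ _)
        · exact ENNReal.rpow_le_rpow (lintegral_mono' Measure.restrict_le_self le_rfl)
            (by positivity)
        · refine le_trans (minkowski_aux (μ.restrict S)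
            (volume.restrict (Set.Ioo (0:ℝ) t)) hr hNjoint hfinJ) ?_
          refine lintegral_mono fun σ => ?_
          exact ENNReal.rpow_le_rpow (lintegral_mono' Measure.restrict_le_self le_rfl)
            (by positivity)

end Stmt5Aux

/-- Interpolation lemma for mixed `L^r(Ω, L^q(0,t))` norms: if
`X : Ω × (0,T) → ℝ` is jointly measurable with
`‖ω ↦ ‖X(ω,·)‖_{L^∞(0,T)}‖_{L^r(Ω)} < ∞`, then for all `ε > 0` and `t ∈ [0,T]`,
`‖‖X‖_{L^q(0,t)}‖_{L^r(Ω)} ≤ ε ‖‖X‖_{L^∞(0,t)}‖_{L^r(Ω)}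
  + ε^{1−q} (1/q) (1−1/q)^{q−1} ∫₀ᵗ ‖‖X‖_{L^∞(0,s)}‖_{L^r(Ω)} ds`. -/
theorem stmt5 {Ω : Type*} [MeasurableSpace Ω] (μ : Measure Ω)
    (T : ℝ) (hT : 0 < T) (r q : ℝ) (hr : 1 ≤ r) (hq : 1 < q)
    (X : Ω → ℝ → ℝ) (hX : Measurable (Function.uncurry X))
    (LrLp : ℝ≥0∞ → ℝ → ℝ≥0∞)
    (hLrLp : ∀ (p : ℝ≥0∞) (s : ℝ), LrLp p s =
      (∫⁻ ω, (eLpNorm (fun τ => X ω τ) p (volume.restrict (Set.Ioo 0 s))) ^ r ∂μ)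
        ^ (1 / r))
    (hfin : LrLp ∞ T < ∞) :
    ∀ ε > 0, ∀ t ∈ Set.Icc (0:ℝ) T,
      LrLp (ENNReal.ofReal q) t ≤
        ENNReal.ofReal ε * LrLp ∞ t +
          ENNReal.ofReal (ε ^ (1 - q) * (1 / q) * (1 - 1 / q) ^ (q - 1)) *
            ∫⁻ s in Set.Ioo (0:ℝ) t, LrLp ∞ s := by
  intro ε hε t ht
  simp only [hLrLp]
  rw [hLrLp] at hfin
  exact Stmt5Aux.main_aux μ hr hq hε ht.1 ht.2 X hX hfin
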